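/- A Hartogs domain construction: if D ⊆ ℂⁿ is invariant under the circle action (t, (z₁,...,zₙ)) ↦ (tz₁, z₂,...,zₙ) for t ∈ S¹, and f is holomorphic on D, then each coefficient function aₖ(z) in the expansion f(z) = Σ aₖ(z₂,...,zₙ) z₁ᵏ, given by aₖ(z) = (1/2πi)∮ f(tz₁, z₂,...,zₙ) t^{-k-1} dt / z₁ᵏ, is holomorphic where defined; equivalently, (1/2π)∫₀^{2π} f(e^{iθ}z₁, z₂,...,zₙ) e^{-ikθ} dθ is holomorphic on D. -/

import Mathlib

open Metric Complex MeasureTheory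

noncomputable def rotB {n : ℕ} : (Fin (n+1) → ℂ) →L[ℂ] (Fin (n+1) → ℂ) :=
  LinearMap.toContinuousLinearMap
    ((LinearMap.single ℂ (fun _ : Fin (n+1) => ℂ) 0).comp (LinearMap.proj 0))

noncomputable def rotL {n : ℕ} (t : ℂ) : (Fin (n+1) → ℂ) →L[ℂ] (Fin (n+1) → ℂ) :=
  ContinuousLinearMap.id ℂ _ + (t - 1) • rotB

lemma rotL_apply {n : ℕ} (t : ℂ) (z : Fin (n+1) → ℂ) :
    rotL t z = Function.update z 0 (t * z 0) := by
  funext i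
  rcases eq_or_ne i 0 with rfl | hi
  · simp [rotL, rotB, Function.update_apply]
    ring
  · simp [rotL, rotB, Function.update_apply, hi, Pi.single, Function.update_apply]

lemma rotL_apply' {n : ℕ} (t : ℂ) (z : Fin (n+1) → ℂ) :
    rotL t z = z + (t - 1) • (Pi.single 0 (z 0) : Fin (n+1) → ℂ) := by
  simp [rotL, rotB]

lemma norm_rotL_le {n : ℕ} (t : ℂ) (ht : ‖t‖ = 1) : ‖rotL (n := n) t‖ ≤ 1 := by
  refine ContinuousLinearMap.opNorm_le_bound _ zero_le_one fun z => ?_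
  rw [one_mul, rotL_apply]
  refine (pi_norm_le_iff_of_nonneg (norm_nonneg z)).2 fun i => ?_
  rcases eq_or_ne i 0 with rfl | hi
  · simp only [Function.update_self, norm_mul, ht, one_mul]
    exact norm_le_pi_norm z 0
  · rw [Function.update_of_ne hi]
    exact norm_le_pi_norm z i

lemma continuous_rotL {n : ℕ} : Continuous (rotL (n := n)) := by
  unfold rotL
  exact continuous_const.add ((continuous_id.sub continuous_const).smul continuous_const)

lemma fderiv_bound_of_forall_near {n : ℕ} {D : Set (Fin (n+1) → ℂ)} (hDo : IsOpen D)
    {f : (Fin (n+1) → ℂ) → ℂ} (hf : DifferentiableOn ℂ f D)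
    {T : Set (Fin (n+1) → ℂ)} (hT : T ⊆ D) {M δ : ℝ} (hδ : 0 < δ)
    (hM : ∀ x ∈ T, ‖f x‖ ≤ M) {x : Fin (n+1) → ℂ}
    (hx : ∀ w, dist w x ≤ δ → w ∈ T) : ‖fderiv ℂ f x‖ ≤ M / δ := by
  have hxT : x ∈ T := hx x (by simp [hδ.le])
  have hxD : x ∈ D := hT hxT
  have hM0 : 0 ≤ M := (norm_nonneg _).trans (hM x hxT)
  refine ContinuousLinearMap.opNorm_le_bound _ (div_nonneg hM0 hδ.le) fun v => ?_
  rcases eq_or_ne v 0 with rfl | hv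
  · simp
  have hv0 : 0 < ‖v‖ := norm_pos_iff.2 hv
  set r : ℝ := δ / ‖v‖ with hr_def
  have hr : 0 < r := div_pos hδ hv0
  set g : ℂ → ℂ := fun w => f (x + w • v) with hg_def
  have hmem : ∀ w : ℂ, ‖w‖ ≤ r → x + w • v ∈ T := by
    intro w hw
    refine hx _ ?_
    rw [dist_self_add_left, norm_smul]
    calc ‖w‖ * ‖v‖ ≤ r * ‖v‖ := by gcongr
      _ = δ := div_mul_cancel₀ _ hv0.ne'
  have gdiff : ∀ w : ℂ, ‖w‖ ≤ r → DifferentiableAt ℂ g w := by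
    intro w hw
    exact (hf.differentiableAt (hDo.mem_nhds (hT (hmem w hw)))).comp w
      ((differentiable_id.smul_const v).const_add x).differentiableAt
  have hdc : DiffContOnCl ℂ g (ball (0:ℂ) r) := by
    refine DifferentiableOn.diffContOnCl ?_
    rw [closure_ball (0:ℂ) hr.ne']
    intro w hw
    exact (gdiff w (by simpa [mem_closedBall, dist_zero_right] using hw)).differentiableWithinAt
  have hC : ∀ w ∈ sphere (0:ℂ) r, ‖g w‖ ≤ M := by
    intro w hw
    exact hM _ (hmem w (le_of_eq (by simpa [mem_sphere, dist_zero_right] using hw)))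
  have key : HasDerivAt g (fderiv ℂ f x v) 0 := by
    have h1 : HasFDerivAt f (fderiv ℂ f x) ((fun w : ℂ => x + w • v) 0) := by
      simpa using (hf.differentiableAt (hDo.mem_nhds hxD)).hasFDerivAt
    have h2 : HasDerivAt (fun w : ℂ => x + w • v) v 0 := by
      simpa using ((hasDerivAt_id (0:ℂ)).smul_const v).const_add x
    exact h1.comp_hasDerivAt 0 h2
  calc ‖fderiv ℂ f x v‖ = ‖deriv g 0‖ := by rw [key.deriv]
    _ ≤ M / r := norm_deriv_le_of_forall_mem_sphere_norm_le hr hdc hC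
    _ = M / δ * ‖v‖ := by rw [hr_def]; field_simp

/-- Hartogs expansion coefficients: if `D ⊆ ℂⁿ` is invariant under the circle action
`(t, z) ↦ (t z₁, z₂, …, zₙ)` for `|t| = 1` and `f` is holomorphic on `D`, then for each
`k ∈ ℤ` the Fourier coefficient
`z ↦ (1/2π) ∫₀^{2π} f(e^{iθ} z₁, z₂, …, zₙ) e^{-ikθ} dθ` is holomorphic on `D`. -/
theorem hartogs_fourier_coefficient_holomorphic {n : ℕ} (D : Set (Fin (n + 1) → ℂ))
    (hDo : IsOpen D)
    (hinv : ∀ t : ℂ, ‖t‖ = 1 → ∀ z ∈ D, Function.update z 0 (t * z 0) ∈ D)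
    (f : (Fin (n + 1) → ℂ) → ℂ) (hf : DifferentiableOn ℂ f D) (k : ℤ) :
    DifferentiableOn ℂ
      (fun z => (1 / (2 * (Real.pi : ℂ))) *
        ∫ θ in (0:ℝ)..(2 * Real.pi),
          f (Function.update z 0 (Complex.exp (θ * Complex.I) * z 0)) *
            Complex.exp (-(k : ℂ) * θ * Complex.I)) D := by
  have he : ∀ θ : ℝ, ‖Complex.exp (θ * Complex.I)‖ = 1 := fun θ => by
    exact Complex.norm_exp_ofReal_mul_I θ
  have hc1 : ∀ θ : ℝ, ‖Complex.exp (-(k:ℂ) * θ * Complex.I)‖ = 1 := by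
    intro θ
    have h : -(k:ℂ) * θ * Complex.I = ((-(k * θ) : ℝ) : ℂ) * Complex.I := by push_cast; ring
    rw [h]; exact Complex.norm_exp_ofReal_mul_I _
  have hFeq : ∀ (z : Fin (n+1) → ℂ) (θ : ℝ),
      f (Function.update z 0 (Complex.exp (θ * Complex.I) * z 0)) *
          Complex.exp (-(k : ℂ) * θ * Complex.I)
        = Complex.exp (-(k:ℂ) * θ * Complex.I) •
            f (rotL (Complex.exp ((θ:ℂ) * Complex.I)) z) := by
    intro z θ; rw [rotL_apply, smul_eq_mul, mul_comm]
  have hγcont : ∀ x : Fin (n+1) → ℂ,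
      Continuous fun θ : ℝ => rotL (Complex.exp ((θ:ℂ) * Complex.I)) x := by
    intro x
    have : (fun θ : ℝ => rotL (Complex.exp ((θ:ℂ) * Complex.I)) x)
        = fun θ : ℝ => x + (Complex.exp ((θ:ℂ) * Complex.I) - 1) •
            (Pi.single 0 (x 0) : Fin (n+1) → ℂ) := funext fun θ => rotL_apply' _ _
    rw [this]; fun_prop
  have hccont : Continuous fun θ : ℝ => Complex.exp (-(k:ℂ) * θ * Complex.I) := by fun_prop
  intro z₀ hz₀
  -- compact orbit and thickening
  set K : Set (Fin (n+1) → ℂ) := (fun t : ℂ => rotL t z₀) '' sphere (0:ℂ) 1 with hK_def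
  have hKc : IsCompact K := by
    refine (isCompact_sphere (0:ℂ) 1).image ?_
    have : (fun t : ℂ => rotL t z₀)
        = fun t : ℂ => z₀ + (t - 1) • (Pi.single 0 (z₀ 0) : Fin (n+1) → ℂ) :=
      funext fun t => rotL_apply' _ _
    rw [this]; fun_prop
  have hKD : K ⊆ D := by
    rintro _ ⟨t, ht, rfl⟩
    show rotL t z₀ ∈ D
    rw [rotL_apply]
    exact hinv t (by simpa [mem_sphere_zero_iff_norm] using ht) z₀ hz₀
  obtain ⟨δ, hδ, hδD⟩ := hKc.exists_cthickening_subset_open hDo hKD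
  set T := cthickening δ K with hT_def
  have hTc : IsCompact T := hKc.cthickening
  obtain ⟨M, hM⟩ := hTc.exists_bound_of_continuousOn (hf.continuousOn.mono hδD)
  have hδ2 : 0 < δ / 2 := half_pos hδ
  -- points near K are in T and have bounded fderiv
  have hbd : ∀ x : Fin (n+1) → ℂ, (∃ y ∈ K, dist x y ≤ δ/2) → ‖fderiv ℂ f x‖ ≤ M / (δ/2) := by
    rintro x ⟨y, hy, hxy⟩
    refine fderiv_bound_of_forall_near hDo hf hδD hδ2 hM fun w hw => ?_
    exact mem_cthickening_of_dist_le w y δ K hy (by linarith [dist_triangle w x y])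
  -- rotated points of the ball are near K
  have hrot : ∀ (θ : ℝ), ∀ x ∈ ball z₀ (δ/2),
      ∃ y ∈ K, dist (rotL (Complex.exp ((θ:ℂ) * Complex.I)) x) y ≤ δ/2 := by
    intro θ x hx
    refine ⟨rotL (Complex.exp ((θ:ℂ) * Complex.I)) z₀,
      ⟨_, by simp [mem_sphere_zero_iff_norm, he θ], rfl⟩, ?_⟩
    rw [dist_eq_norm, ← map_sub]
    calc ‖rotL (Complex.exp ((θ:ℂ) * Complex.I)) (x - z₀)‖
        ≤ ‖rotL (n := n) (Complex.exp ((θ:ℂ) * Complex.I))‖ * ‖x - z₀‖ :=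
          ContinuousLinearMap.le_opNorm _ _
      _ ≤ 1 * ‖x - z₀‖ := by gcongr; exact norm_rotL_le _ (he θ)
      _ ≤ δ/2 := by rw [one_mul, ← dist_eq_norm]; exact (mem_ball.1 hx).le
  have hrotT : ∀ (θ : ℝ), ∀ x ∈ ball z₀ (δ/2),
      rotL (Complex.exp ((θ:ℂ) * Complex.I)) x ∈ T := by
    intro θ x hx
    obtain ⟨y, hy, hd⟩ := hrot θ x hx
    exact mem_cthickening_of_dist_le _ y δ K hy (hd.trans (by linarith))
  have hrotD : ∀ (θ : ℝ), ∀ x ∈ ball z₀ (δ/2),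
      rotL (Complex.exp ((θ:ℂ) * Complex.I)) x ∈ D := fun θ x hx => hδD (hrotT θ x hx)
  set F : (Fin (n+1) → ℂ) → ℝ → ℂ := fun x θ =>
    Complex.exp (-(k:ℂ) * θ * Complex.I) • f (rotL (Complex.exp ((θ:ℂ) * Complex.I)) x)
    with hF_def
  set F' : (Fin (n+1) → ℂ) → ℝ → (Fin (n+1) → ℂ) →L[ℂ] ℂ := fun x θ =>
    Complex.exp (-(k:ℂ) * θ * Complex.I) •
      ((fderiv ℂ f (rotL (Complex.exp ((θ:ℂ) * Complex.I)) x)).comp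
        (rotL (Complex.exp ((θ:ℂ) * Complex.I)))) with hF'_def
  have hcontF : ∀ x ∈ ball z₀ (δ/2), Continuous (F x) := by
    intro x hx
    refine hccont.smul (continuous_iff_continuousAt.2 fun θ => ?_)
    have h1 : ContinuousAt f (rotL (Complex.exp ((θ:ℂ) * Complex.I)) x) :=
      (hf.differentiableAt (hDo.mem_nhds (hrotD θ x hx))).continuousAt
    exact ContinuousAt.comp (x := θ) h1 ((hγcont x).continuousAt)
  have hz₀ball : z₀ ∈ ball z₀ (δ/2) := mem_ball_self hδ2
  have main : HasFDerivAt (fun x => ∫ θ in (0:ℝ)..(2*Real.pi), F x θ)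
      (∫ θ in (0:ℝ)..(2*Real.pi), F' z₀ θ) z₀ := by
    refine intervalIntegral.hasFDerivAt_integral_of_dominated_of_fderiv_le
      (bound := fun _ => M / (δ/2)) (ball_mem_nhds z₀ hδ2) ?_ ?_ ?_ ?_ ?_ ?_
    · filter_upwards [ball_mem_nhds z₀ hδ2] with x hx
      exact (hcontF x hx).aestronglyMeasurable
    · exact (hcontF z₀ hz₀ball).intervalIntegrable _ _
    · have hb : Continuous fun p : ((Fin (n+1) → ℂ) →L[ℂ] ℂ) ×
          ((Fin (n+1) → ℂ) →L[ℂ] (Fin (n+1) → ℂ)) => p.1.comp p.2 :=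
        isBoundedBilinearMap_comp.continuous
      have m1 : Measurable fun θ : ℝ =>
          fderiv ℂ f (rotL (Complex.exp ((θ:ℂ) * Complex.I)) z₀) :=
        (measurable_fderiv ℂ f).comp (hγcont z₀).measurable
      have m2 : Measurable fun θ : ℝ => rotL (n := n) (Complex.exp ((θ:ℂ) * Complex.I)) :=
        (continuous_rotL.comp (by fun_prop)).measurable
      have hs : Continuous fun p : ℂ × ((Fin (n+1) → ℂ) →L[ℂ] ℂ) => p.1 • p.2 :=
        continuous_smul
      have : Measurable (F' z₀) :=
        hs.measurable.comp (hccont.measurable.prodMk ((hb.measurable).comp (m1.prodMk m2)))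
      exact this.aestronglyMeasurable
    · refine Filter.Eventually.of_forall fun θ => fun _ => fun x hx => ?_
      rw [hF'_def]
      calc ‖Complex.exp (-(k:ℂ) * θ * Complex.I) •
            ((fderiv ℂ f (rotL (Complex.exp ((θ:ℂ) * Complex.I)) x)).comp
              (rotL (Complex.exp ((θ:ℂ) * Complex.I))))‖
          ≤ ‖(fderiv ℂ f (rotL (Complex.exp ((θ:ℂ) * Complex.I)) x)).comp
              (rotL (Complex.exp ((θ:ℂ) * Complex.I)))‖ := by
            refine (norm_smul_le (Complex.exp (-(k:ℂ) * θ * Complex.I))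
              ((fderiv ℂ f (rotL (Complex.exp ((θ:ℂ) * Complex.I)) x)).comp
                (rotL (Complex.exp ((θ:ℂ) * Complex.I))))).trans ?_
            rw [hc1, one_mul]
        _ ≤ ‖fderiv ℂ f (rotL (Complex.exp ((θ:ℂ) * Complex.I)) x)‖ *
              ‖rotL (n := n) (Complex.exp ((θ:ℂ) * Complex.I))‖ :=
            ContinuousLinearMap.opNorm_comp_le _ _
        _ ≤ (M / (δ/2)) * 1 := by
            have h0 : (0:ℝ) ≤ M / (δ/2) := by
              have : (0:ℝ) ≤ M := (norm_nonneg _).trans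
                (hM _ (self_subset_cthickening _ ⟨1, by simp, rfl⟩))
              positivity
            exact mul_le_mul (hbd _ (hrot θ x hx)) (norm_rotL_le _ (he θ)) (norm_nonneg _) h0
        _ = M / (δ/2) := mul_one _
    · exact intervalIntegrable_const
    · refine Filter.Eventually.of_forall fun θ => fun _ => fun x hx => ?_
      have h1 : HasFDerivAt f (fderiv ℂ f (rotL (Complex.exp ((θ:ℂ) * Complex.I)) x))
          (rotL (Complex.exp ((θ:ℂ) * Complex.I)) x) :=
        (hf.differentiableAt (hDo.mem_nhds (hrotD θ x hx))).hasFDerivAt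
      exact (h1.comp x (rotL (Complex.exp ((θ:ℂ) * Complex.I))).hasFDerivAt).const_smul (Complex.exp (-(k:ℂ) * θ * Complex.I))
  have hgoal :
      DifferentiableAt ℂ (fun z => (1 / (2 * (Real.pi : ℂ))) *
        ∫ θ in (0:ℝ)..(2*Real.pi), F z θ) z₀ :=
    (main.differentiableAt).const_mul _
  refine DifferentiableAt.differentiableWithinAt ?_
  have : (fun z => (1 / (2 * (Real.pi : ℂ))) *
      ∫ θ in (0:ℝ)..(2 * Real.pi),
        f (Function.update z 0 (Complex.exp (θ * Complex.I) * z 0)) *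
          Complex.exp (-(k : ℂ) * θ * Complex.I))
      = fun z => (1 / (2 * (Real.pi : ℂ))) * ∫ θ in (0:ℝ)..(2*Real.pi), F z θ := by
    funext z
    congr 1
    refine intervalIntegral.integral_congr fun θ _ => ?_
    exact hFeq z θ
  rw [this]
  exact hgoal
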